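/- arXiv:0809.4089 — 2 statements merged into one kernel-verified Lean document; each statement's English description precedes it below -/
import Mathlib

section
/- Let A ∈ ℝⁿˣⁿ, P ∈ ℝⁿˣⁿ positive semidefinite, Q ∈ ℝⁿˣⁿ positive semidefinite, C ∈ ℝᵐˣⁿ, R ∈ ℝᵐˣᵐ positive definite. Define M₁ = A P Cᵀ (C P Cᵀ + R)⁻¹ C P Aᵀ and M₂ = A P Cᵀ (C P Cᵀ + R/2)⁻¹ C P Aᵀ, S = A P Aᵀ + Q. Let f : [0,1] → [0,1] be twice differentiable, convex, decreasing with f(0)=1, and define J(d) = S - f(d) f(1-d) M₂ - (f(d) - 2 f(d) f(1-d) + f(1-d)) M₁. Then J''(d) ⪯ 0 for all d ∈ (0,1), i.e., J is matrix concave on [0,1]. -/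
open Matrix Set Filter


lemma my_deriv_nonneg_of_monotoneOn {g : ℝ → ℝ} {d : ℝ}
    (hg : MonotoneOn g (Set.Icc 0 1)) (hd : d ∈ Set.Ioo (0:ℝ) 1)
    (hdiff : DifferentiableAt ℝ g d) : 0 ≤ deriv g d := by
  have H : HasDerivAt g (deriv g d) d := hdiff.hasDerivAt
  have h1 : Tendsto (slope g d) (nhdsWithin d (Set.Ioi d)) (nhds (deriv g d)) :=
    (hasDerivAt_iff_tendsto_slope.mp H).mono_left
      (nhdsWithin_mono _ fun y hy => ne_of_gt hy)
  refine ge_of_tendsto h1 ?_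
  filter_upwards [Ioo_mem_nhdsGT_of_mem (Set.mem_Ico.mpr ⟨le_refl d, hd.2⟩)] with y hy
  rw [slope_def_field]
  exact div_nonneg
    (sub_nonneg.2 (hg ⟨hd.1.le, hd.2.le⟩ ⟨(hd.1.trans hy.1).le, hy.2.le⟩ hy.1.le))
    (sub_nonneg.2 hy.1.le)

lemma my_deriv_nonpos_of_antitoneOn {g : ℝ → ℝ} {d : ℝ}
    (hg : AntitoneOn g (Set.Icc 0 1)) (hd : d ∈ Set.Ioo (0:ℝ) 1)
    (hdiff : DifferentiableAt ℝ g d) : deriv g d ≤ 0 := by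
  have H : HasDerivAt g (deriv g d) d := hdiff.hasDerivAt
  have h1 : Tendsto (slope g d) (nhdsWithin d (Set.Ioi d)) (nhds (deriv g d)) :=
    (hasDerivAt_iff_tendsto_slope.mp H).mono_left
      (nhdsWithin_mono _ fun y hy => ne_of_gt hy)
  refine le_of_tendsto h1 ?_
  filter_upwards [Ioo_mem_nhdsGT_of_mem (Set.mem_Ico.mpr ⟨le_refl d, hd.2⟩)] with y hy
  rw [slope_def_field]
  exact div_nonpos_of_nonpos_of_nonneg
    (sub_nonpos.2 (hg ⟨hd.1.le, hd.2.le⟩ ⟨(hd.1.trans hy.1).le, hy.2.le⟩ hy.1.le))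
    (sub_nonneg.2 hy.1.le)

lemma my_qf_nonneg {k : ℕ} {M : Matrix (Fin k) (Fin k) ℝ} (hM : M.PosSemidef)
    (v : Fin k → ℝ) : 0 ≤ v ⬝ᵥ M *ᵥ v := by
  simpa using hM.dotProduct_mulVec_nonneg v

lemma my_qf_conj {k l : ℕ} (N : Matrix (Fin k) (Fin l) ℝ) (G : Matrix (Fin l) (Fin l) ℝ)
    (x : Fin k → ℝ) :
    x ⬝ᵥ (N * G * Nᵀ) *ᵥ x = (Nᵀ *ᵥ x) ⬝ᵥ G *ᵥ (Nᵀ *ᵥ x) := by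
  rw [← Matrix.mulVec_mulVec, ← Matrix.mulVec_mulVec, Matrix.dotProduct_mulVec,
    ← Matrix.mulVec_transpose]

lemma my_smul_posDef {k : ℕ} {R : Matrix (Fin k) (Fin k) ℝ} (hR : R.PosDef)
    {c : ℝ} (hc : 0 < c) : (c • R).PosDef := by
  refine Matrix.PosDef.of_dotProduct_mulVec_pos ?_ (fun x hx => ?_)
  · unfold Matrix.IsHermitian
    rw [conjTranspose_smul, hR.1.eq]
    simp
  · rw [Matrix.smul_mulVec, dotProduct_smul, smul_eq_mul]
    exact mul_pos hc (by simpa using hR.dotProduct_mulVec_pos hx)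

lemma my_smul_posSemidef {k : ℕ} {M : Matrix (Fin k) (Fin k) ℝ} (hM : M.PosSemidef)
    {c : ℝ} (hc : 0 ≤ c) : (c • M).PosSemidef := by
  refine Matrix.PosSemidef.of_dotProduct_mulVec_nonneg ?_ (fun x => ?_)
  · unfold Matrix.IsHermitian
    rw [conjTranspose_smul, hM.1.eq]
    simp
  · rw [Matrix.smul_mulVec, dotProduct_smul, smul_eq_mul]
    exact mul_nonneg hc (by simpa using hM.dotProduct_mulVec_nonneg x)

lemma my_inv_sub_inv_posSemidef {k : ℕ} {X Y : Matrix (Fin k) (Fin k) ℝ}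
    (hX : X.PosDef) (hY : Y.PosDef) (hXY : (X - Y).PosSemidef) :
    (Y⁻¹ - X⁻¹).PosSemidef := by
  have hdX : IsUnit X.det := (Matrix.isUnit_iff_isUnit_det X).mp hX.isUnit
  have hdY : IsUnit Y.det := (Matrix.isUnit_iff_isUnit_det Y).mp hY.isUnit
  have e1 : X⁻¹ * X = 1 := Matrix.nonsing_inv_mul X hdX
  have e2 : Y⁻¹ * Y = 1 := Matrix.nonsing_inv_mul Y hdY
  have e3 : Y * Y⁻¹ = 1 := Matrix.mul_nonsing_inv Y hdY
  have e4 : X * X⁻¹ = 1 := Matrix.mul_nonsing_inv X hdX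
  have hXiH : (X⁻¹)ᴴ = X⁻¹ := hX.inv.isHermitian.eq
  have hDH : (X - Y)ᴴ = X - Y := hXY.isHermitian.eq
  have t1 : (X⁻¹ * (X - Y) * (X⁻¹)ᴴ).PosSemidef := hXY.mul_mul_conjTranspose_same X⁻¹
  rw [hXiH] at t1
  have t2 : ((X⁻¹ * (X - Y)) * Y⁻¹ * (X⁻¹ * (X - Y))ᴴ).PosSemidef :=
    hY.inv.posSemidef.mul_mul_conjTranspose_same (X⁻¹ * (X - Y))
  rw [conjTranspose_mul, hDH, hXiH] at t2
  have key : Y⁻¹ - X⁻¹ =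
      X⁻¹ * (X - Y) * X⁻¹ + (X⁻¹ * (X - Y)) * Y⁻¹ * ((X - Y) * X⁻¹) := by
    have h1 : X⁻¹ * (X - Y) * X⁻¹ = X⁻¹ - X⁻¹ * Y * X⁻¹ := by
      rw [Matrix.mul_sub, Matrix.sub_mul]
      rw [e1]
      simp [Matrix.mul_assoc]
    have h2 : (X⁻¹ * (X - Y)) * Y⁻¹ * ((X - Y) * X⁻¹) =
        Y⁻¹ - X⁻¹ - X⁻¹ + X⁻¹ * Y * X⁻¹ := by
      rw [Matrix.mul_sub X⁻¹, Matrix.sub_mul _ _ X⁻¹, e1]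
      rw [Matrix.sub_mul, Matrix.sub_mul, Matrix.mul_sub, Matrix.mul_sub]
      simp only [Matrix.one_mul, Matrix.mul_one]
      rw [e4, Matrix.mul_one, ← Matrix.mul_assoc Y⁻¹ Y X⁻¹, e2, Matrix.one_mul,
        Matrix.mul_assoc X⁻¹ Y Y⁻¹, e3]
      simp only [Matrix.mul_one, ← Matrix.mul_assoc]
      abel
    rw [h1, h2]
    abel
  rw [key]
  exact t1.add t2


theorem stmt_5 {n m : ℕ} (A P Q : Matrix (Fin n) (Fin n) ℝ)
    (hP : P.PosSemidef) (hQ : Q.PosSemidef)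
    (C : Matrix (Fin m) (Fin n) ℝ) (R : Matrix (Fin m) (Fin m) ℝ) (hR : R.PosDef)
    (M₁ M₂ S : Matrix (Fin n) (Fin n) ℝ)
    (hM₁ : M₁ = A * P * Cᵀ * (C * P * Cᵀ + R)⁻¹ * C * P * Aᵀ)
    (hM₂ : M₂ = A * P * Cᵀ * (C * P * Cᵀ + (2:ℝ)⁻¹ • R)⁻¹ * C * P * Aᵀ)
    (hS : S = A * P * Aᵀ + Q)
    (f : ℝ → ℝ)
    (hd1 : Differentiable ℝ f) (hd2 : Differentiable ℝ (deriv f))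
    (hconv : ConvexOn ℝ (Set.Icc (0:ℝ) 1) f)
    (hdec : AntitoneOn f (Set.Icc (0:ℝ) 1)) (hf0 : f 0 = 1)
    (hrange : ∀ x ∈ Set.Icc (0:ℝ) 1, f x ∈ Set.Icc (0:ℝ) 1)
    (J : ℝ → Matrix (Fin n) (Fin n) ℝ)
    (hJ : ∀ d, J d = S - (f d * f (1 - d)) • M₂ -
      (f d - 2 * f d * f (1 - d) + f (1 - d)) • M₁) :
    (∀ d ∈ Set.Ioo (0:ℝ) 1, ∀ x : Fin n → ℝ,
        deriv (deriv fun t => x ⬝ᵥ (J t).mulVec x) d ≤ 0) ∧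
    (∀ x : Fin n → ℝ, ConcaveOn ℝ (Set.Icc (0:ℝ) 1) fun d => x ⬝ᵥ (J d).mulVec x) := by
  classical
  -- matrix preliminaries
  have hPsymm : Pᵀ = P := by
    have h := hP.1
    rwa [Matrix.IsHermitian, conjTranspose_eq_transpose_of_trivial] at h
  have hNT : (A * P * Cᵀ)ᵀ = C * P * Aᵀ := by
    rw [Matrix.transpose_mul, Matrix.transpose_mul, Matrix.transpose_transpose, hPsymm,
      ← Matrix.mul_assoc]
  have hCPC : (C * P * Cᵀ).PosSemidef := by
    have h := hP.mul_mul_conjTranspose_same C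
    rwa [conjTranspose_eq_transpose_of_trivial] at h
  have hR2 : ((2:ℝ)⁻¹ • R).PosDef := my_smul_posDef hR (by norm_num)
  have hB₁ : (C * P * Cᵀ + R).PosDef := Matrix.PosDef.posSemidef_add hCPC hR
  have hB₂ : (C * P * Cᵀ + (2:ℝ)⁻¹ • R).PosDef := Matrix.PosDef.posSemidef_add hCPC hR2
  set B₁ := C * P * Cᵀ + R with hB₁def
  set B₂ := C * P * Cᵀ + (2:ℝ)⁻¹ • R with hB₂def
  have hd12 : (B₂⁻¹ - B₁⁻¹).PosSemidef := by
    apply my_inv_sub_inv_posSemidef hB₁ hB₂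
    have h : B₁ - B₂ = (2:ℝ)⁻¹ • R := by rw [hB₁def, hB₂def]; module
    rw [h]; exact hR2.posSemidef
  have h2B₂ : ((2:ℝ) • B₂).PosDef := my_smul_posDef hB₂ two_pos
  have hd21 : (B₁⁻¹ - ((2:ℝ) • B₂)⁻¹).PosSemidef := by
    apply my_inv_sub_inv_posSemidef h2B₂ hB₁
    have h : (2:ℝ) • B₂ - B₁ = C * P * Cᵀ := by rw [hB₁def, hB₂def]; module
    rw [h]; exact hCPC
  have hinv2 : ((2:ℝ) • B₂)⁻¹ = (2:ℝ)⁻¹ • B₂⁻¹ := by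
    apply Matrix.inv_eq_left_inv
    rw [Matrix.smul_mul, Matrix.mul_smul, smul_smul,
      Matrix.nonsing_inv_mul B₂ ((Matrix.isUnit_iff_isUnit_det _).mp hB₂.isUnit)]
    norm_num
  rw [hinv2] at hd21
  -- the main per-vector claim
  have main : ∀ x : Fin n → ℝ,
      Differentiable ℝ (fun t => x ⬝ᵥ (J t) *ᵥ x) ∧
      Differentiable ℝ (deriv (fun t => x ⬝ᵥ (J t) *ᵥ x)) ∧
      ∀ d ∈ Set.Ioo (0:ℝ) 1, deriv (deriv (fun t => x ⬝ᵥ (J t) *ᵥ x)) d ≤ 0 := by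
    intro x
    set v := (C * P * Aᵀ) *ᵥ x with hv
    set a := x ⬝ᵥ M₂ *ᵥ x with hadef
    set b := x ⬝ᵥ M₁ *ᵥ x with hbdef
    set s := x ⬝ᵥ S *ᵥ x with hsdef
    clear_value v a b s
    have hMa : a = v ⬝ᵥ B₂⁻¹ *ᵥ v := by
      rw [hadef, hM₂]
      have h : A * P * Cᵀ * B₂⁻¹ * C * P * Aᵀ = (A * P * Cᵀ) * B₂⁻¹ * ((A * P * Cᵀ)ᵀ) := by
        rw [hNT]; simp only [Matrix.mul_assoc]
      rw [h, my_qf_conj, hNT, ← hv]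
    have hMb : b = v ⬝ᵥ B₁⁻¹ *ᵥ v := by
      rw [hbdef, hM₁]
      have h : A * P * Cᵀ * B₁⁻¹ * C * P * Aᵀ = (A * P * Cᵀ) * B₁⁻¹ * ((A * P * Cᵀ)ᵀ) := by
        rw [hNT]; simp only [Matrix.mul_assoc]
      rw [h, my_qf_conj, hNT, ← hv]
    have hb0 : 0 ≤ b := by rw [hMb]; exact my_qf_nonneg hB₁.inv.posSemidef v
    have hab1 : b ≤ a := by
      have h := my_qf_nonneg hd12 v
      rw [Matrix.sub_mulVec, dotProduct_sub] at h
      rw [hMa, hMb]; linarith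
    have ha2b : a ≤ 2 * b := by
      have h := my_qf_nonneg hd21 v
      rw [Matrix.sub_mulVec, dotProduct_sub, Matrix.smul_mulVec, dotProduct_smul,
        smul_eq_mul] at h
      rw [hMa, hMb]; linarith
    -- scalar function
    have hfun : (fun t => x ⬝ᵥ (J t) *ᵥ x) =
        (fun t => s - (f t * f (1 - t)) * a
          - (f t - 2 * (f t * f (1 - t)) + f (1 - t)) * b) := by
      funext t
      rw [hJ]
      simp only [Matrix.sub_mulVec, Matrix.smul_mulVec, dotProduct_sub, dotProduct_smul,
        smul_eq_mul, ← hsdef, ← hadef, ← hbdef]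
      ring
    -- first derivatives
    have H1 : ∀ t : ℝ, HasDerivAt (fun u => f (1 - u)) (-deriv f (1 - t)) t := by
      intro t
      have h := ((hd1 (1 - t)).hasDerivAt).comp t ((hasDerivAt_id t).const_sub 1)
      simpa [Function.comp_def] using h
    have Hprod : ∀ t : ℝ, HasDerivAt (fun u => f u * f (1 - u))
        (deriv f t * f (1 - t) - f t * deriv f (1 - t)) t := by
      intro t
      have h := ((hd1 t).hasDerivAt).fun_mul (H1 t)
      simpa [mul_neg, ← sub_eq_add_neg] using h
    set φ : ℝ → ℝ := fun t => -((deriv f t * f (1 - t) - f t * deriv f (1 - t)) * a)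
        - (deriv f t - 2 * (deriv f t * f (1 - t) - f t * deriv f (1 - t)) - deriv f (1 - t)) * b
      with hφ
    have Hψ : ∀ t : ℝ, HasDerivAt (fun u => s - (f u * f (1 - u)) * a
        - (f u - 2 * (f u * f (1 - u)) + f (1 - u)) * b) (φ t) t := by
      intro t
      have h := ((hasDerivAt_const t s).fun_sub ((Hprod t).mul_const a)).fun_sub
        (((((hd1 t).hasDerivAt).fun_sub ((Hprod t).const_mul 2)).fun_add (H1 t)).mul_const b)
      refine h.congr_deriv ?_
      rw [hφ]; ring
    have hdiff1 : Differentiable ℝ (fun t => x ⬝ᵥ (J t) *ᵥ x) := by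
      rw [hfun]; exact fun t => (Hψ t).differentiableAt
    have hderiv1 : deriv (fun t => x ⬝ᵥ (J t) *ᵥ x) = φ := by
      rw [hfun]; funext t; exact (Hψ t).deriv
    -- second derivatives
    have H3 : ∀ t : ℝ, HasDerivAt (fun u => deriv f (1 - u)) (-deriv (deriv f) (1 - t)) t := by
      intro t
      have h := ((hd2 (1 - t)).hasDerivAt).comp t ((hasDerivAt_id t).const_sub 1)
      simpa [Function.comp_def] using h
    have Hφ : ∀ t : ℝ, HasDerivAt φ
        (-((deriv (deriv f) t * f (1 - t) - 2 * (deriv f t * deriv f (1 - t))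
            + f t * deriv (deriv f) (1 - t)) * a)
          - (deriv (deriv f) t
            - 2 * (deriv (deriv f) t * f (1 - t) - 2 * (deriv f t * deriv f (1 - t))
              + f t * deriv (deriv f) (1 - t))
            + deriv (deriv f) (1 - t)) * b) t := by
      intro t
      have hp2 : HasDerivAt (fun u => deriv f u * f (1 - u) - f u * deriv f (1 - u))
          (deriv (deriv f) t * f (1 - t) - 2 * (deriv f t * deriv f (1 - t))
            + f t * deriv (deriv f) (1 - t)) t := by
        have h := (((hd2 t).hasDerivAt).fun_mul (H1 t)).fun_sub (((hd1 t).hasDerivAt).fun_mul (H3 t))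
        refine h.congr_deriv ?_
        ring
      have h := ((hp2.mul_const a).fun_neg).fun_sub
        (((((hd2 t).hasDerivAt).fun_sub (hp2.const_mul 2)).fun_sub (H3 t)).mul_const b)
      refine h.congr_deriv ?_
      ring
    have hdiff2 : Differentiable ℝ (deriv (fun t => x ⬝ᵥ (J t) *ᵥ x)) := by
      rw [hderiv1]; exact fun t => (Hφ t).differentiableAt
    refine ⟨hdiff1, hdiff2, ?_⟩
    intro d hd
    have hdd : (1 - d) ∈ Set.Ioo (0:ℝ) 1 := ⟨by linarith [hd.1, hd.2], by linarith [hd.1]⟩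
    have hmono : MonotoneOn (deriv f) (Set.Icc 0 1) :=
      hconv.monotoneOn_deriv (fun y _ => hd1 y)
    have hg2d : 0 ≤ deriv (deriv f) d := my_deriv_nonneg_of_monotoneOn hmono hd (hd2 d)
    have hg2dd : 0 ≤ deriv (deriv f) (1 - d) :=
      my_deriv_nonneg_of_monotoneOn hmono hdd (hd2 (1 - d))
    have hg1d : deriv f d ≤ 0 := my_deriv_nonpos_of_antitoneOn hdec hd (hd1 d)
    have hg1dd : deriv f (1 - d) ≤ 0 := my_deriv_nonpos_of_antitoneOn hdec hdd (hd1 (1 - d))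
    have hu := hrange (1 - d) ⟨hdd.1.le, hdd.2.le⟩
    have hw := hrange d ⟨hd.1.le, hd.2.le⟩
    rw [hderiv1, (Hφ d).deriv]
    have hc : 0 ≤ 2 * b - a := by linarith
    have h1 : deriv (deriv f) d * ((2 * b - a) * f (1 - d) - b) ≤ 0 := by
      apply mul_nonpos_of_nonneg_of_nonpos hg2d
      nlinarith [hu.1, hu.2]
    have h2 : deriv (deriv f) (1 - d) * ((2 * b - a) * f d - b) ≤ 0 := by
      apply mul_nonpos_of_nonneg_of_nonpos hg2dd
      nlinarith [hw.1, hw.2]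
    have h3 : 0 ≤ deriv f d * deriv f (1 - d) := by nlinarith [mul_nonneg (neg_nonneg.2 hg1d) (neg_nonneg.2 hg1dd)]
    have h4 : 0 ≤ 2 * (2 * b - a) * (deriv f d * deriv f (1 - d)) :=
      mul_nonneg (by linarith) h3
    nlinarith [h1, h2, h4]
  refine ⟨fun d hd x => (main x).2.2 d hd, fun x => ?_⟩
  obtain ⟨hD1, hD2, hle⟩ := main x
  apply concaveOn_of_deriv2_nonpos (convex_Icc 0 1) hD1.continuous.continuousOn
    hD1.differentiableOn hD2.differentiableOn
  intro y hy
  rw [interior_Icc] at hy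
  simpa using hle y hy
end

section
/- Let f(d) = e^{-d} on [0,1]. Then f is twice differentiable, convex, strictly decreasing, f(0) = 1, and f maps [0,1] into [0,1]. Consequently, for symmetric matrices M₁, M₂ with M₂ ⪰ M₁ ⪰ 0 and 2M₁ ⪰ M₂, the function d ↦ S - e^{-d}e^{-(1-d)}M₂ - (e^{-d} - 2e^{-d}e^{-(1-d)} + e^{-(1-d)})M₁ is matrix concave on [0,1] and attains its Loewner lower bound over [0,1] at d=0 or d=1. -/
open Matrix

lemma exp_neg_convex : ConvexOn ℝ Set.univ (fun d : ℝ => Real.exp (-d)) := by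
  have h := convexOn_exp.comp_affineMap (AffineMap.lineMap (0:ℝ) (-1:ℝ))
  have e : (fun d : ℝ => Real.exp (-d)) =
      Real.exp ∘ (AffineMap.lineMap (0:ℝ) (-1:ℝ)) := by
    funext d; simp [Function.comp, AffineMap.lineMap_apply]
  rw [e]
  simpa using h

lemma exp_sub_one_convex : ConvexOn ℝ Set.univ (fun d : ℝ => Real.exp (d - 1)) := by
  have h := convexOn_exp.comp_affineMap (AffineMap.lineMap (-1:ℝ) (0:ℝ))
  have : (fun d : ℝ => Real.exp (d - 1)) =
      Real.exp ∘ (AffineMap.lineMap (-1:ℝ) (0:ℝ)) := by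
    funext d; simp [Function.comp, AffineMap.lineMap_apply]; ring_nf
  rw [this]
  simpa using h

lemma h_convex : ConvexOn ℝ Set.univ (fun d : ℝ => Real.exp (-d) + Real.exp (d - 1)) :=
  exp_neg_convex.add exp_sub_one_convex

theorem stmt_14 {n : ℕ} (f : ℝ → ℝ) (hf : f = fun d => Real.exp (-d))
    (S M₁ M₂ : Matrix (Fin n) (Fin n) ℝ)
    (hSs : S.IsSymm) (hM₁s : M₁.IsSymm) (hM₂s : M₂.IsSymm)
    (hM₁ : M₁.PosSemidef) (hM₂₁ : (M₂ - M₁).PosSemidef)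
    (h2M : ((2:ℝ) • M₁ - M₂).PosSemidef)
    (J : ℝ → Matrix (Fin n) (Fin n) ℝ)
    (hJ : ∀ d, J d = S - (f d * f (1 - d)) • M₂ -
      (f d - 2 * f d * f (1 - d) + f (1 - d)) • M₁) :
    ContDiff ℝ 2 f ∧
    ConvexOn ℝ (Set.Icc (0:ℝ) 1) f ∧
    StrictAntiOn f (Set.Icc (0:ℝ) 1) ∧
    f 0 = 1 ∧
    (∀ x ∈ Set.Icc (0:ℝ) 1, f x ∈ Set.Icc (0:ℝ) 1) ∧
    (∀ x : Fin n → ℝ, ConcaveOn ℝ (Set.Icc (0:ℝ) 1) fun d => x ⬝ᵥ (J d).mulVec x) ∧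
    (∀ x : Fin n → ℝ,
      IsLeast ((fun d => x ⬝ᵥ (J d).mulVec x) '' Set.Icc (0:ℝ) 1)
        (min (x ⬝ᵥ (J 0).mulVec x) (x ⬝ᵥ (J 1).mulVec x))) := by
  subst hf
  -- key algebraic identity
  have key : ∀ (x : Fin n → ℝ) (d : ℝ),
      x ⬝ᵥ (J d).mulVec x =
        (x ⬝ᵥ S.mulVec x - Real.exp (-1) * (x ⬝ᵥ M₂.mulVec x)
          + 2 * Real.exp (-1) * (x ⬝ᵥ M₁.mulVec x))
        - (Real.exp (-d) + Real.exp (d - 1)) * (x ⬝ᵥ M₁.mulVec x) := by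
    intro x d
    have e1 : Real.exp (-d) * Real.exp (-(1 - d)) = Real.exp (-1) := by
      rw [← Real.exp_add]; ring_nf
    have e2 : Real.exp (-(1 - d)) = Real.exp (d - 1) := by ring_nf
    rw [hJ]
    simp only [Matrix.sub_mulVec, Matrix.smul_mulVec, dotProduct_sub,
      dotProduct_smul, smul_eq_mul]
    rw [e2] at e1 ⊢
    linear_combination (2 * (x ⬝ᵥ M₁.mulVec x) - x ⬝ᵥ M₂.mulVec x) * e1
  refine ⟨?_, ?_, ?_, ?_, ?_, ?_, ?_⟩
  · exact Real.contDiff_exp.comp contDiff_neg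
  · exact exp_neg_convex.subset (Set.subset_univ _) (convex_Icc 0 1)
  · intro a _ b _ hab
    exact Real.exp_lt_exp.mpr (by linarith)
  · simp
  · intro x hx
    constructor
    · positivity
    · calc Real.exp (-x) ≤ Real.exp 0 := Real.exp_le_exp.mpr (by linarith [hx.1])
        _ = 1 := Real.exp_zero
  · intro x
    have ha : 0 ≤ x ⬝ᵥ M₁.mulVec x := hM₁.dotProduct_mulVec_nonneg x
    have hcv : ConvexOn ℝ (Set.Icc (0:ℝ) 1)
        (fun d => (Real.exp (-d) + Real.exp (d - 1)) * (x ⬝ᵥ M₁.mulVec x)) := by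
      have := (h_convex.subset (Set.subset_univ _) (convex_Icc 0 1)).smul ha
      simpa [mul_comm, smul_eq_mul] using this
    have hcc := hcv.neg.add (concaveOn_const
      (c := x ⬝ᵥ S.mulVec x - Real.exp (-1) * (x ⬝ᵥ M₂.mulVec x)
        + 2 * Real.exp (-1) * (x ⬝ᵥ M₁.mulVec x)) (convex_Icc (0:ℝ) 1))
    convert hcc using 1
    any_goals rfl
    funext d
    rw [key x d]
    simp only [Pi.add_apply, Pi.neg_apply]
    ring_nf
  · intro x
    have ha : 0 ≤ x ⬝ᵥ M₁.mulVec x := hM₁.dotProduct_mulVec_nonneg x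
    have hbd : ∀ d ∈ Set.Icc (0:ℝ) 1,
        Real.exp (-d) + Real.exp (d - 1) ≤ Real.exp 0 + Real.exp (-1) := by
      intro d hd
      have hseg : d ∈ segment ℝ (0:ℝ) 1 := by rwa [segment_eq_Icc zero_le_one]
      have := h_convex.le_on_segment (Set.mem_univ 0) (Set.mem_univ 1) hseg
      have h01 : Real.exp (-(0:ℝ)) + Real.exp ((0:ℝ) - 1)
          = Real.exp (-(1:ℝ)) + Real.exp ((1:ℝ) - 1) := by norm_num [add_comm]
      simp only [neg_zero] at this h01 ⊢
      rw [max_eq_left (le_of_eq h01.symm)] at this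
      convert this using 2 <;> norm_num
      rfl
    have heq : x ⬝ᵥ (J 0).mulVec x = x ⬝ᵥ (J 1).mulVec x := by
      rw [key x 0, key x 1]; norm_num [add_comm]
    constructor
    · refine ⟨0, by norm_num, ?_⟩
      rw [min_eq_left (le_of_eq heq)]
    · rintro y ⟨d, hd, rfl⟩
      show _ ≤ x ⬝ᵥ (J d).mulVec x
      rw [min_eq_left (le_of_eq heq), key x 0, key x d]
      have := hbd d hd
      have h0 : Real.exp (-(0:ℝ)) + Real.exp ((0:ℝ) - 1) = Real.exp 0 + Real.exp (-1) := by
        norm_num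
      rw [h0]
      nlinarith [hbd d hd, ha]
end
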